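/- With H₀(f,ξ) = ξ²f/2 + (g²π²/6)f³ and M(U,ξ) the kinetic Maxwellian, one has ∫_ℝ H₀(M(U,ξ),ξ) dξ = h u²/2 + g h²/2, i.e. the integral of the kinetic entropy of the Maxwellian equals the macroscopic entropy η(U). -/

import Mathlib

set_option maxHeartbeats 1000000

open MeasureTheory Real
attribute [local fun_prop] Real.continuous_arcsin

noncomputable def Mx (g h u ξ : ℝ) : ℝ := (1/(g*π)) * Real.sqrt (max 0 (2*g*h - (ξ-u)^2))
noncomputable def H0 (g f ξ : ℝ) : ℝ := ξ^2*f/2 + (g^2*π^2/6)*f^3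
noncomputable def dH0 (g f ξ : ℝ) : ℝ := ξ^2/2 + (g^2*π^2/2)*f^2

theorem kinetic_entropy_integral (g h u : ℝ) (hg : 0 < g) (hh : 0 ≤ h) :
    (∫ ξ : ℝ, H0 g (Mx g h u ξ) ξ) = h * u^2 / 2 + g * h^2 / 2 := by
  rcases eq_or_lt_of_le hh with h0 | hh
  · subst h0
    have hz : ∀ ξ : ℝ, H0 g (Mx g 0 u ξ) ξ = 0 := by
      intro ξ
      have hm : max (0:ℝ) (2*g*0 - (ξ-u)^2) = 0 :=
        max_eq_left (by nlinarith [sq_nonneg (ξ - u)])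
      simp only [H0, Mx, hm, Real.sqrt_zero]
      ring
    simp only [hz, integral_zero]
    ring
  -- main case 0 < h
  set a : ℝ := Real.sqrt (2*g*h) with ha_def
  have ha : 0 < a := Real.sqrt_pos.2 (by positivity)
  have ha2 : a^2 = 2*g*h := Real.sq_sqrt (by positivity)
  set φ : ℝ → ℝ := fun ξ => H0 g (Mx g h u ξ) ξ with hφ
  have hsupp : Function.support φ ⊆ Set.Ioc (u-a) (u+a) := by
    intro ξ hξ
    by_contra hmem
    apply hξ
    rw [Set.mem_Ioc, not_and_or, not_lt, not_le] at hmem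
    have h1 : a^2 ≤ (ξ-u)^2 := by
      rcases hmem with hc | hc
      · nlinarith
      · nlinarith
    have : max 0 (2*g*h - (ξ-u)^2) = 0 := by
      apply max_eq_left; rw [← ha2]; linarith
    simp [hφ, H0, Mx, this]
  have hab : u - a ≤ u + a := by linarith
  set F : ℝ → ℝ := fun ξ => (1/(2*g*π)) *
      ((u^2/2 + a^2/4) * ((ξ-u) * Real.sqrt (a^2-(ξ-u)^2) + a^2 * Real.arcsin ((ξ-u)/a))
       - (2*u/3) * ((a^2-(ξ-u)^2) * Real.sqrt (a^2-(ξ-u)^2))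
       - (1/6) * ((ξ-u) * ((a^2-(ξ-u)^2) * Real.sqrt (a^2-(ξ-u)^2)))) with hF
  have hφcont : Continuous φ := by
    rw [hφ]; unfold H0 Mx; fun_prop
  have hFcont : Continuous F := by
    rw [hF]; fun_prop
  have hderiv : ∀ x ∈ Set.Ioo (u-a) (u+a), HasDerivAt F (φ x) x := by
    intro x hx
    obtain ⟨hx1, hx2⟩ := hx
    have ht : (x-u)^2 < a^2 := by nlinarith
    set r : ℝ := Real.sqrt (a^2 - (x-u)^2) with hrdef
    have hr2 : r^2 = a^2 - (x-u)^2 := Real.sq_sqrt (by nlinarith)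
    have hr0 : 0 < r := Real.sqrt_pos.2 (by nlinarith)
    have hid : HasDerivAt (fun ξ : ℝ => ξ - u) 1 x := (hasDerivAt_id x).sub_const u
    have hq : HasDerivAt (fun ξ : ℝ => a^2 - (ξ-u)^2) (-(2*(x-u))) x := by
      have h2 := hid.pow 2
      exact ((hasDerivAt_const x (a^2)).sub h2).congr_deriv (by norm_num)
    have hs : HasDerivAt (fun ξ : ℝ => Real.sqrt (a^2-(ξ-u)^2)) (-(2*(x-u))/(2*r)) x := by
      exact hq.sqrt (by nlinarith)
    have harg : ((x-u)/a) ≠ -1 ∧ ((x-u)/a) ≠ 1 := by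
      constructor <;> intro hc
      · have : x - u = -a := by field_simp at hc; linarith
        nlinarith
      · have : x - u = a := by field_simp at hc; linarith
        nlinarith
    have harc : HasDerivAt (fun ξ : ℝ => Real.arcsin ((ξ-u)/a))
        ((1 / Real.sqrt (1 - ((x-u)/a)^2)) * (1/a)) x :=
      by have := (Real.hasDerivAt_arcsin harg.1 harg.2).comp x (hid.div_const a); exact this
    have hsq1 : Real.sqrt (1 - ((x-u)/a)^2) = r / a := by
      have : 1 - ((x-u)/a)^2 = (a^2 - (x-u)^2) / a^2 := by
        field_simp
      rw [this, Real.sqrt_div (by nlinarith), Real.sqrt_sq ha.le]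
    have hT1 : HasDerivAt (fun ξ : ℝ => (ξ-u) * Real.sqrt (a^2-(ξ-u)^2) + a^2 * Real.arcsin ((ξ-u)/a))
        (1 * r + (x-u) * (-(2*(x-u))/(2*r)) + a^2 * ((1 / Real.sqrt (1 - ((x-u)/a)^2)) * (1/a))) x :=
      (hid.mul hs).add (harc.const_mul (a^2))
    have hT2 : HasDerivAt (fun ξ : ℝ => (a^2-(ξ-u)^2) * Real.sqrt (a^2-(ξ-u)^2))
        ((-(2*(x-u))) * r + (a^2-(x-u)^2) * (-(2*(x-u))/(2*r))) x := hq.mul hs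
    have hT3 : HasDerivAt (fun ξ : ℝ => (ξ-u) * ((a^2-(ξ-u)^2) * Real.sqrt (a^2-(ξ-u)^2)))
        (1 * ((a^2-(x-u)^2) * r) + (x-u) * ((-(2*(x-u))) * r + (a^2-(x-u)^2) * (-(2*(x-u))/(2*r)))) x :=
      hid.mul hT2
    have hFd := (((hT1.const_mul (u^2/2 + a^2/4)).sub (hT2.const_mul (2*u/3))).sub
      (hT3.const_mul (1/6 : ℝ))).const_mul (1/(2*g*π))
    convert hFd using 1
    · rfl
    · rfl
    · rfl
    have hmax : max 0 (2*g*h - (x-u)^2) = a^2 - (x-u)^2 := by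
      rw [← ha2]; exact max_eq_right (by nlinarith)
    have hMx : Mx g h u x = (1/(g*π)) * r := by rw [Mx, hmax]
    rw [hφ]; simp only [H0, hMx, hsq1]
    have hrr : r * r = a^2 - (x-u)^2 := by nlinarith [hr2]
    have haa : a^2 = r^2 + (x-u)^2 := by linarith [hr2]
    rw [haa]
    field_simp
    ring
  have hint : IntervalIntegrable φ volume (u-a) (u+a) := hφcont.intervalIntegrable _ _
  have hFTC := intervalIntegral.integral_eq_sub_of_hasDerivAt_of_le hab
    hFcont.continuousOn hderiv hint
  have hstep : (∫ ξ : ℝ, φ ξ) = ∫ ξ in (u-a)..(u+a), φ ξ :=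
    (intervalIntegral.integral_eq_integral_of_support_subset hsupp).symm
  rw [hφ] at hstep ⊢
  rw [hstep, hFTC]
  have e1 : u + a - u = a := by ring
  have e2 : u - a - u = -a := by ring
  rw [hF]
  simp only [e1, e2]
  have z1 : a^2 - a^2 = 0 := by ring
  have z2 : a^2 - (-a)^2 = 0 := by ring
  rw [z1, z2, Real.sqrt_zero, div_self ha.ne', neg_div, div_self ha.ne',
    Real.arcsin_one, Real.arcsin_neg_one]
  rw [ha2]
  field_simp
  ring
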